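/- arXiv:1401.2434 — 7 statements merged into one kernel-verified Lean document; each statement's English description precedes it below -/
import Mathlib

section
/- Let G be a finite abelian group of order n ≥ 4 with enumeration g_0, ..., g_{n-1} (g_0 = 0), and let L = {x ∈ ℤ^n : Σ x_i = 0, Σ x_i g_i = 0 in G}. Then every nonzero x ∈ L has Euclidean norm ‖x‖ ≥ 2, and this bound is attained; i.e., the minimum distance of the lattice L equals 2. -/
/-- For `G` finite abelian of order `n ≥ 4` with enumeration `g`,
`g 0 = 0`, every nonzero `x ∈ L = {x : ∑ x i = 0, ∑ x i • g i = 0}` has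
Euclidean norm `≥ 2`, and the bound is attained: the minimum distance is `2`. -/
theorem stmt_3 (n : ℕ) (hn : 4 ≤ n) (G : Type) [AddCommGroup G] [Fintype G]
    (hcard : Fintype.card G = n) (g : Fin n ≃ G)
    (hg0 : g ⟨0, by omega⟩ = 0) :
    (∀ x : Fin n → ℤ, ∑ i, x i = 0 → ∑ i, x i • g i = 0 → x ≠ 0 →
      2 ≤ Real.sqrt (∑ i, ((x i : ℝ)) ^ 2)) ∧
    (∃ x : Fin n → ℤ, ∑ i, x i = 0 ∧ ∑ i, x i • g i = 0 ∧ x ≠ 0 ∧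
      Real.sqrt (∑ i, ((x i : ℝ)) ^ 2) = 2) := by
  classical
  have sqrt4 : Real.sqrt 4 = 2 := by
    rw [show (4:ℝ) = 2^2 by norm_num, Real.sqrt_sq (by norm_num)]
  constructor
  · intro x hsum hsmul hx
    have key : (4:ℤ) ≤ ∑ i, x i ^ 2 := by
      by_contra hlt
      push_neg at hlt
      have hb : ∀ i, x i = -1 ∨ x i = 0 ∨ x i = 1 := by
        intro i
        have h1 : x i ^ 2 ≤ ∑ j, x j ^ 2 :=
          Finset.single_le_sum (fun j _ => sq_nonneg (x j)) (Finset.mem_univ i)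
        have h2 : x i ^ 2 ≤ 3 := by omega
        have h3 : -1 ≤ x i := by nlinarith
        have h4 : x i ≤ 1 := by nlinarith
        omega
      set P := Finset.univ.filter (fun i => x i = 1) with hP
      set N := Finset.univ.filter (fun i => x i = -1) with hN
      have hxsplit : ∀ i, x i = (if x i = 1 then (1:ℤ) else 0) - (if x i = -1 then 1 else 0) := by
        intro i; rcases hb i with h|h|h <;> simp [h]
      have hxsq : ∀ i, x i ^ 2 = (if x i = 1 then (1:ℤ) else 0) + (if x i = -1 then 1 else 0) := by
        intro i; rcases hb i with h|h|h <;> simp [h]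
      have hsum' : (P.card : ℤ) - N.card = 0 := by
        rw [← hsum]
        rw [Finset.sum_congr rfl (fun i _ => hxsplit i), Finset.sum_sub_distrib,
          Finset.sum_boole, Finset.sum_boole]
      have hsq' : (P.card : ℤ) + N.card ≤ 3 := by
        calc (P.card : ℤ) + N.card
            = ∑ i, x i ^ 2 := by
              rw [Finset.sum_congr rfl (fun i _ => hxsq i), Finset.sum_add_distrib,
                Finset.sum_boole, Finset.sum_boole]
          _ ≤ 3 := by omega
      have hpos : 1 ≤ P.card + N.card := by
        rcases Function.ne_iff.1 hx with ⟨i, hi⟩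
        have : i ∈ P ∨ i ∈ N := by
          rcases hb i with h|h|h
          · right; simp [hN, h]
          · exact absurd h (by simpa using hi)
          · left; simp [hP, h]
        rcases this with h|h
        · have := Finset.card_pos.2 ⟨i, h⟩; omega
        · have := Finset.card_pos.2 ⟨i, h⟩; omega
      have hPc : P.card = 1 := by omega
      have hNc : N.card = 1 := by omega
      obtain ⟨i, hPi⟩ := Finset.card_eq_one.1 hPc
      obtain ⟨j, hNj⟩ := Finset.card_eq_one.1 hNc
      have hxi : x i = 1 := by
        have : i ∈ P := hPi ▸ Finset.mem_singleton_self i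
        simpa [hP] using this
      have hxj : x j = -1 := by
        have : j ∈ N := hNj ▸ Finset.mem_singleton_self j
        simpa [hN] using this
      have hij : i ≠ j := by intro h; rw [h, hxj] at hxi; omega
      have hzero : ∀ k, k ≠ i → k ≠ j → x k = 0 := by
        intro k hki hkj
        rcases hb k with h|h|h
        · exfalso; apply hkj
          have : k ∈ N := by simp [hN, h]
          simpa [hNj] using this
        · exact h
        · exfalso; apply hki
          have : k ∈ P := by simp [hP, h]
          simpa [hPi] using this
      have : ∑ k, x k • g k = g i - g j := by
        have hpt : ∀ k ∈ Finset.univ, x k • g k =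
            (if k = i then g i else 0) - (if k = j then g j else 0) := by
          intro k _
          by_cases hki : k = i
          · subst hki; simp [hxi, if_neg hij]
          · by_cases hkj : k = j
            · subst hkj; simp [hxj, hki]
            · simp [hzero k hki hkj, hki, hkj]
        rw [Finset.sum_congr rfl hpt, Finset.sum_sub_distrib,
          Finset.sum_ite_eq' Finset.univ i (fun _ => g i),
          Finset.sum_ite_eq' Finset.univ j (fun _ => g j)]
        simp
      rw [hsmul] at this
      have : g i = g j := by
        have := this.symm
        rwa [sub_eq_zero] at this
      exact hij (g.injective this)
    have hcast : (4:ℝ) ≤ ∑ i, ((x i : ℝ)) ^ 2 := by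
      have : ((4:ℤ):ℝ) ≤ ((∑ i, x i ^ 2 : ℤ) : ℝ) := by exact_mod_cast key
      push_cast at this
      convert this using 2
    calc (2:ℝ) = Real.sqrt 4 := sqrt4.symm
      _ ≤ _ := Real.sqrt_le_sqrt hcast
  · -- attainment
    have hlt : 1 < Fintype.card G := by omega
    haveI : Nontrivial G := Fintype.one_lt_card_iff_nontrivial.1 hlt
    obtain ⟨a, ha⟩ := exists_ne (0:G)
    have hb : ∃ b : G, b ∉ ({0, a, -a} : Finset G) := by
      by_contra h
      push_neg at h
      have : (Finset.univ : Finset G) ⊆ {0, a, -a} := fun b _ => h b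
      have := Finset.card_le_card this
      have h3 : ({0, a, -a} : Finset G).card ≤ 3 := by
        apply le_trans (Finset.card_insert_le _ _)
        have := Finset.card_insert_le (a) ({-a} : Finset G)
        simp at this ⊢; omega
      rw [Finset.card_univ, hcard] at this
      omega
    obtain ⟨b, hb⟩ := hb
    simp only [Finset.mem_insert, Finset.mem_singleton] at hb
    push_neg at hb
    obtain ⟨hb0, hba, hbna⟩ := hb
    have hab0 : a + b ≠ 0 := by
      intro h; apply hbna
      have : b = -a := by
        have h' := h; rw [add_comm] at h'
        exact eq_neg_of_add_eq_zero_left h'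
      exact this
    have haab : a ≠ a + b := by
      intro h; exact hb0 (left_eq_add.mp h)
    have hbab : b ≠ a + b := by
      intro h; rw [add_comm] at h; exact ha (left_eq_add.mp h)
    set ia := g.symm a with hia
    set ib := g.symm b with hib
    set iab := g.symm (a+b) with hiab
    set i0 := g.symm 0 with hi0
    have d1 : ia ≠ ib := by
      intro h; apply hba; have := congrArg g h; simp [hia, hib] at this; exact this.symm
    have d2 : ia ≠ iab := fun h => haab (by simpa [hia, hiab] using congrArg g h)
    have d3 : ia ≠ i0 := fun h => ha (by simpa [hia, hi0] using congrArg g h)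
    have d4 : ib ≠ iab := fun h => hbab (by simpa [hib, hiab] using congrArg g h)
    have d5 : ib ≠ i0 := fun h => hb0 (by simpa [hib, hi0] using congrArg g h)
    have d6 : iab ≠ i0 := fun h => hab0 (by simpa [hiab, hi0] using congrArg g h)
    refine ⟨fun k => (if k = ia then 1 else 0) + (if k = ib then 1 else 0)
      - (if k = iab then 1 else 0) - (if k = i0 then 1 else 0), ?_, ?_, ?_, ?_⟩
    · simp [Finset.sum_add_distrib, Finset.sum_sub_distrib,
        Finset.sum_ite_eq' Finset.univ]
    · have : ∀ k ∈ Finset.univ,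
          ((if k = ia then (1:ℤ) else 0) + (if k = ib then 1 else 0)
            - (if k = iab then 1 else 0) - (if k = i0 then 1 else 0)) • g k =
          (if k = ia then g k else 0) + (if k = ib then g k else 0)
            - (if k = iab then g k else 0) - (if k = i0 then g k else 0) := by
        intro k _
        simp only [sub_smul, add_smul, ite_smul, one_smul, zero_smul]
      rw [Finset.sum_congr rfl this]
      simp only [Finset.sum_sub_distrib, Finset.sum_add_distrib,
        Finset.sum_ite_eq' Finset.univ, Finset.mem_univ, if_true]
      simp [hia, hib, hiab, hi0]
    · intro h
      have := congrFun h ia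
      simp [if_neg d1, if_neg d2, if_neg d3] at this
    · have hpt : ∀ k ∈ Finset.univ,
          (((((if k = ia then (1:ℤ) else 0) + (if k = ib then 1 else 0)
            - (if k = iab then 1 else 0) - (if k = i0 then 1 else 0)) : ℤ) : ℝ)) ^ 2 =
          (if k = ia then (1:ℝ) else 0) + (if k = ib then 1 else 0)
            + (if k = iab then 1 else 0) + (if k = i0 then 1 else 0) := by
        intro k _
        by_cases h1 : k = ia
        · subst h1; simp [if_neg d1, if_neg d2, if_neg d3]
        · by_cases h2 : k = ib
          · subst h2; simp [if_neg d4, if_neg d5, h1]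
          · by_cases h3 : k = iab
            · subst h3; simp [if_neg d6, h1, h2]
            · by_cases h4 : k = i0
              · subst h4
                simp [Ne.symm d3, Ne.symm d5, Ne.symm d6]
              · simp [h1, h2, h3, h4]
      rw [Finset.sum_congr rfl hpt]
      simp only [Finset.sum_add_distrib, Finset.sum_ite_eq' Finset.univ,
        Finset.mem_univ, if_true]
      norm_num [sqrt4]
end

section
/- Let G be a finite abelian group of order n ≥ 4 and ε = |G[2]|. Then the number of ordered quadruples (P, Q, R, S) of pairwise distinct elements of G satisfying P + Q = R + S, counted as unordered-pair data — i.e., the number of vectors e_P + e_Q − e_R − e_S in ℤ^G with P, Q, R, S pairwise distinct and P + Q = R + S — equals (n/ε)·(n−ε)(n−ε−2)/4 + (n − n/ε)·n(n−2)/4. -/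
open Finset

set_option linter.unusedSectionVars false
set_option maxHeartbeats 1000000

section Aux
variable {G : Type} [AddCommGroup G] [Fintype G] [DecidableEq G]

def gvec (q : (G × G) × (G × G)) : G → ℤ :=
  Pi.single q.1.1 1 + Pi.single q.1.2 1 - Pi.single q.2.1 1 - Pi.single q.2.2 1

lemma gvec_apply (q : (G × G) × (G × G)) (t : G) :
    gvec q t = (if t = q.1.1 then 1 else 0) + (if t = q.1.2 then 1 else 0)
      - (if t = q.2.1 then 1 else 0) - (if t = q.2.2 then 1 else 0) := by
  simp [gvec, Pi.single_apply]

lemma gvec_eq_one_iff {P Q R S : G} (hPQ : P ≠ Q) (hPR : P ≠ R) (hPS : P ≠ S)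
    (hQR : Q ≠ R) (hQS : Q ≠ S) (hRS : R ≠ S) (t : G) :
    gvec ((P,Q),(R,S)) t = 1 ↔ (t = P ∨ t = Q) := by
  rw [gvec_apply]
  by_cases h1 : t = P <;> by_cases h2 : t = Q <;> by_cases h3 : t = R <;>
    by_cases h4 : t = S <;> simp_all

lemma gvec_eq_negone_iff {P Q R S : G} (hPQ : P ≠ Q) (hPR : P ≠ R) (hPS : P ≠ S)
    (hQR : Q ≠ R) (hQS : Q ≠ S) (hRS : R ≠ S) (t : G) :
    gvec ((P,Q),(R,S)) t = -1 ↔ (t = R ∨ t = S) := by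
  rw [gvec_apply]
  by_cases h1 : t = P <;> by_cases h2 : t = Q <;> by_cases h3 : t = R <;>
    by_cases h4 : t = S <;> simp_all

lemma eq_or_swap {P Q R S P' Q' R' S' : G}
    (hPQ : P ≠ Q) (hPR : P ≠ R) (hPS : P ≠ S) (hQR : Q ≠ R) (hQS : Q ≠ S) (hRS : R ≠ S)
    (hPQ' : P' ≠ Q') (hPR' : P' ≠ R') (hPS' : P' ≠ S') (hQR' : Q' ≠ R') (hQS' : Q' ≠ S')
    (hRS' : R' ≠ S')
    (hg : gvec ((P',Q'),(R',S')) = gvec ((P,Q),(R,S))) :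
    ((P' = P ∧ Q' = Q) ∨ (P' = Q ∧ Q' = P)) ∧ ((R' = R ∧ S' = S) ∨ (R' = S ∧ S' = R)) := by
  have e1 : gvec ((P,Q),(R,S)) P' = 1 := by
    rw [← hg]; exact (gvec_eq_one_iff hPQ' hPR' hPS' hQR' hQS' hRS' P').mpr (Or.inl rfl)
  have e2 : gvec ((P,Q),(R,S)) Q' = 1 := by
    rw [← hg]; exact (gvec_eq_one_iff hPQ' hPR' hPS' hQR' hQS' hRS' Q').mpr (Or.inr rfl)
  have e3 : gvec ((P,Q),(R,S)) R' = -1 := by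
    rw [← hg]; exact (gvec_eq_negone_iff hPQ' hPR' hPS' hQR' hQS' hRS' R').mpr (Or.inl rfl)
  have e4 : gvec ((P,Q),(R,S)) S' = -1 := by
    rw [← hg]; exact (gvec_eq_negone_iff hPQ' hPR' hPS' hQR' hQS' hRS' S').mpr (Or.inr rfl)
  have m1 := (gvec_eq_one_iff hPQ hPR hPS hQR hQS hRS P').mp e1
  have m2 := (gvec_eq_one_iff hPQ hPR hPS hQR hQS hRS Q').mp e2
  have m3 := (gvec_eq_negone_iff hPQ hPR hPS hQR hQS hRS R').mp e3
  have m4 := (gvec_eq_negone_iff hPQ hPR hPS hQR hQS hRS S').mp e4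
  constructor
  · rcases m1 with h1 | h1 <;> rcases m2 with h2 | h2 <;>
      first | (exfalso; exact hPQ' (h1.trans h2.symm)) | tauto
  · rcases m3 with h3 | h3 <;> rcases m4 with h4 | h4 <;>
      first | (exfalso; exact hRS' (h3.trans h4.symm)) | tauto
def cnum (A : G) : ℕ := (univ.filter (fun P : G => P + P = A)).card
def pairFin (A : G) : Finset (G × G) := univ.filter (fun p => p.1 ≠ p.2 ∧ p.1 + p.2 = A)

lemma sum_cnum : ∑ A : G, cnum A = Fintype.card G := by
  rw [← Finset.card_univ,
    Finset.card_eq_sum_card_fiberwise (fun (P : G) _ => mem_univ (P + P))]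
  rfl

lemma cnum_zero_eq : cnum (0 : G) = Nat.card {x : G // 2 • x = 0} := by
  rw [Nat.card_eq_fintype_card, Fintype.card_subtype]
  simp [cnum, two_nsmul]

lemma cnum_eq_zero_or (A : G) : cnum A = 0 ∨ cnum A = cnum (0 : G) := by
  by_cases h : ∃ P₀ : G, P₀ + P₀ = A
  · right
    obtain ⟨P₀, hP₀⟩ := h
    apply Finset.card_bij (fun P _ => P - P₀)
    · intro P hP
      simp only [mem_filter, mem_univ, true_and] at hP ⊢
      rw [← hP₀] at hP
      have : P - P₀ + (P - P₀) = P + P - (P₀ + P₀) := by abel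
      rw [this, hP, sub_self]
    · intro a _ b _ hab
      exact sub_left_injective hab
    · intro x hx
      simp only [mem_filter, mem_univ, true_and] at hx
      refine ⟨x + P₀, ?_, by abel⟩
      simp only [mem_filter, mem_univ, true_and]
      have : x + P₀ + (x + P₀) = x + x + (P₀ + P₀) := by abel
      rw [this, hx, hP₀, zero_add]
    -- need membership proof order; fix below if error
  · left
    simp only [cnum, Finset.card_eq_zero, Finset.filter_eq_empty_iff]
    push_neg at h
    intro P _
    exact h P

def Tset (G : Type) [AddCommGroup G] [Fintype G] [DecidableEq G] :
    Finset ((G × G) × (G × G)) :=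
  univ.filter (fun q => q.1.1 ≠ q.1.2 ∧ q.1.1 ≠ q.2.1 ∧ q.1.1 ≠ q.2.2 ∧
    q.1.2 ≠ q.2.1 ∧ q.1.2 ≠ q.2.2 ∧ q.2.1 ≠ q.2.2 ∧ q.1.1 + q.1.2 = q.2.1 + q.2.2)
def Tprime (G : Type) [AddCommGroup G] [Fintype G] [DecidableEq G] :
    Finset ((G × G) × (G × G)) :=
  univ.filter (fun q => q.1.1 ≠ q.1.2 ∧ q.2.1 ≠ q.2.2 ∧ q.1.1 + q.1.2 = q.2.1 + q.2.2)
def Dset (G : Type) [AddCommGroup G] [Fintype G] [DecidableEq G] :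
    Finset ((G × G) × (G × G)) :=
  univ.filter (fun q => q.1.1 ≠ q.1.2 ∧ (q.2 = q.1 ∨ q.2 = (q.1.2, q.1.1)))

lemma card_sumfiber (A : G) :
    (univ.filter (fun p : G × G => p.1 + p.2 = A)).card = Fintype.card G := by
  rw [← Finset.card_univ]
  apply Finset.card_nbij' (fun p => p.1) (fun P => (P, A - P))
  · intro p _; exact mem_univ _
  · intro P _
    simp only [mem_coe, mem_filter, mem_univ, true_and]
    abel
  · intro p hp
    simp only [mem_coe, mem_filter, mem_univ, true_and] at hp
    have : A - p.1 = p.2 := by rw [← hp]; abel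
    exact Prod.ext rfl this
  · intro P _; rfl

lemma diag_card (A : G) :
    (univ.filter (fun p : G × G => p.1 + p.2 = A ∧ p.1 = p.2)).card = cnum A := by
  unfold cnum
  apply Finset.card_nbij' (fun p => p.1) (fun P => (P, P))
  · intro p hp
    simp only [mem_coe, mem_filter, mem_univ, true_and] at hp ⊢
    rw [← hp.2] at hp
    exact hp.1
  · intro P hP
    simp only [mem_coe, mem_filter, mem_univ, true_and] at hP ⊢
    exact ⟨hP, by simp⟩
  · intro p hp
    simp only [mem_coe, mem_filter, mem_univ, true_and] at hp
    exact Prod.ext rfl hp.2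
  · intro P _; rfl

lemma pairFin_card_add (A : G) : (pairFin A).card + cnum A = Fintype.card G := by
  rw [← card_sumfiber A, ← diag_card A]
  have e1 : pairFin A =
      (univ.filter (fun p : G × G => p.1 + p.2 = A)).filter (fun p => p.1 ≠ p.2) := by
    unfold pairFin
    rw [Finset.filter_filter]
    ext p
    simp only [mem_filter]
    tauto
  have e2 : univ.filter (fun p : G × G => p.1 + p.2 = A ∧ p.1 = p.2) =
      (univ.filter (fun p : G × G => p.1 + p.2 = A)).filter (fun p => ¬ p.1 ≠ p.2) := by
    rw [Finset.filter_filter]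
    ext p
    simp only [mem_filter, not_not]
  rw [e1, e2, Finset.card_filter_add_card_filter_not]

lemma Tprime_card :
    (Tprime G).card = ∑ A : G, (pairFin A).card * (pairFin A).card := by
  rw [Finset.card_eq_sum_card_fiberwise
    (fun q (_ : q ∈ Tprime G) => mem_univ (q.1.1 + q.1.2))]
  refine Finset.sum_congr rfl (fun A _ => ?_)
  rw [← Finset.card_product]
  congr 1
  ext q
  simp only [Tprime, pairFin, mem_filter, mem_univ, true_and, Finset.mem_product]
  constructor
  · rintro ⟨⟨h1, h2, h3⟩, h4⟩
    exact ⟨⟨h1, h4⟩, ⟨h2, by rw [← h3, h4]⟩⟩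
  · rintro ⟨⟨h1, h4⟩, ⟨h2, h5⟩⟩
    exact ⟨⟨h1, h2, by rw [h4, h5]⟩, h4⟩

lemma Dset_card : (Dset G).card = 2 * (univ : Finset G).offDiag.card := by
  have hD : Dset G = univ.filter (fun q : (G × G) × (G × G) => q.1.1 ≠ q.1.2 ∧ q.2 = q.1)
      ∪ univ.filter (fun q => q.1.1 ≠ q.1.2 ∧ q.2 = (q.1.2, q.1.1)) := by
    ext q
    simp only [Dset, mem_union, mem_filter, mem_univ, true_and]
    tauto
  rw [hD, Finset.card_union_of_disjoint]
  · have c1 : (univ.filter (fun q : (G × G) × (G × G) => q.1.1 ≠ q.1.2 ∧ q.2 = q.1)).card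
        = (univ : Finset G).offDiag.card := by
      apply Finset.card_nbij' (fun q => q.1) (fun p => (p, p))
      · intro q hq
        simp only [mem_coe, mem_filter, mem_univ, true_and] at hq
        simp [Finset.mem_offDiag, hq.1]
      · intro p hp
        simp only [mem_coe, Finset.mem_offDiag] at hp
        simp only [mem_coe, mem_filter, mem_univ, true_and]
        exact ⟨hp.2.2, by simp⟩
      · intro q hq
        simp only [mem_coe, mem_filter, mem_univ, true_and] at hq
        exact Prod.ext rfl hq.2.symm
      · intro p _; rfl
    have c2 : (univ.filter
          (fun q : (G × G) × (G × G) => q.1.1 ≠ q.1.2 ∧ q.2 = (q.1.2, q.1.1))).card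
        = (univ : Finset G).offDiag.card := by
      apply Finset.card_nbij' (fun q => q.1) (fun p => (p, (p.2, p.1)))
      · intro q hq
        simp only [mem_coe, mem_filter, mem_univ, true_and] at hq
        simp [Finset.mem_offDiag, hq.1]
      · intro p hp
        simp only [mem_coe, Finset.mem_offDiag] at hp
        simp only [mem_coe, mem_filter, mem_univ, true_and]
        exact ⟨hp.2.2, by simp⟩
      · intro q hq
        simp only [mem_coe, mem_filter, mem_univ, true_and] at hq
        exact Prod.ext rfl hq.2.symm
      · intro p _; rfl
    rw [c1, c2]; ring
  · rw [Finset.disjoint_filter]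
    rintro q _ ⟨h1, h2⟩ ⟨_, h3⟩
    rw [h2] at h3
    exact h1 (congrArg Prod.fst h3)

lemma Tprime_partition : Tprime G = Tset G ∪ Dset G := by
  ext q
  obtain ⟨⟨P, Q⟩, ⟨R, S⟩⟩ := q
  simp only [Tprime, Tset, Dset, mem_union, mem_filter, mem_univ, true_and]
  constructor
  · rintro ⟨h1, h2, h3⟩
    by_cases hPR : P = R
    · subst hPR
      have : Q = S := add_left_cancel h3
      subst this
      right; exact ⟨h1, Or.inl rfl⟩
    by_cases hPS : P = S
    · subst hPS
      rw [add_comm R P] at h3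
      have : Q = R := add_left_cancel h3
      subst this
      right; exact ⟨h1, Or.inr rfl⟩
    by_cases hQR : Q = R
    · subst hQR
      rw [add_comm P Q] at h3
      exact absurd (add_left_cancel h3) hPS
    by_cases hQS : Q = S
    · subst hQS
      exact absurd (add_right_cancel h3) hPR
    · left; exact ⟨h1, hPR, hPS, hQR, hQS, h2, h3⟩
  · rintro (⟨h1, _, _, _, _, h6, h7⟩ | ⟨h1, (h2 | h2)⟩)
    · exact ⟨h1, h6, h7⟩
    · simp only [Prod.mk.injEq] at h2
      obtain ⟨rfl, rfl⟩ := h2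
      exact ⟨h1, h1, rfl⟩
    · simp only [Prod.mk.injEq] at h2
      obtain ⟨rfl, rfl⟩ := h2
      exact ⟨h1, fun h => h1 h.symm, add_comm _ _⟩

lemma Tdisj : Disjoint (Tset G) (Dset G) := by
  simp only [Tset, Dset]
  rw [Finset.disjoint_filter]
  rintro q _ ⟨_, h2, _, h4, _, _, _⟩ ⟨_, (h | h)⟩
  · exact h2 (congrArg Prod.fst h).symm
  · exact h4 (congrArg Prod.fst h).symm

lemma gvec_swap1 (P Q R S : G) : gvec ((Q,P),(R,S)) = gvec ((P,Q),(R,S)) := by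
  simp only [gvec]; ring

lemma gvec_swap2 (P Q R S : G) : gvec ((P,Q),(S,R)) = gvec ((P,Q),(R,S)) := by
  simp only [gvec]; ring


lemma fiber_eq {P Q R S : G} (hPQ : P ≠ Q) (hPR : P ≠ R) (hPS : P ≠ S)
    (hQR : Q ≠ R) (hQS : Q ≠ S) (hRS : R ≠ S) (hsum : P + Q = R + S) :
    (Tset G).filter (fun q' => gvec q' = gvec ((P,Q),(R,S))) =
      {((P,Q),(R,S)), ((Q,P),(R,S)), ((P,Q),(S,R)), ((Q,P),(S,R))} := by
  ext q'
  simp only [mem_filter, Tset, mem_univ, true_and, mem_insert, mem_singleton]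
  constructor
  · rintro ⟨⟨h1, h2, h3, h4, h5, h6, h7⟩, hg⟩
    obtain ⟨⟨P', Q'⟩, ⟨R', S'⟩⟩ := q'
    obtain ⟨hA, hB⟩ := eq_or_swap hPQ hPR hPS hQR hQS hRS h1 h2 h3 h4 h5 h6 hg
    rcases hA with ⟨rfl, rfl⟩ | ⟨rfl, rfl⟩ <;> rcases hB with ⟨rfl, rfl⟩ | ⟨rfl, rfl⟩ <;> tauto
  · rintro (rfl | rfl | rfl | rfl) <;>
      refine ⟨⟨?_, ?_, ?_, ?_, ?_, ?_, ?_⟩, ?_⟩ <;>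
      simp_all [gvec_swap1, gvec_swap2, eq_comm] <;>
      first
        | (rw [add_comm]; assumption)
        | (rw [add_comm P Q]; assumption)
        | (rw [add_comm S R]; assumption)
        | (rw [add_comm Q P, add_comm S R]; assumption)
        | apply add_comm
        | skip

lemma fiber_card {P Q R S : G} (hPQ : P ≠ Q) (hRS : R ≠ S) :
    ({((P,Q),(R,S)), ((Q,P),(R,S)), ((P,Q),(S,R)), ((Q,P),(S,R))} :
      Finset ((G × G) × (G × G))).card = 4 := by
  rw [card_insert_of_notMem, card_insert_of_notMem, card_insert_of_notMem,
    card_singleton] <;> simp [Prod.ext_iff] <;> tauto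

lemma Tcard_eq : (Tset G).card = 4 * ((Tset G).image gvec).card := by
  rw [Finset.card_eq_sum_card_image gvec (Tset G)]
  rw [Finset.sum_congr rfl (fun b hb => ?_), Finset.sum_const, smul_eq_mul, mul_comm]
  obtain ⟨q, hq, rfl⟩ := Finset.mem_image.mp hb
  obtain ⟨⟨P, Q⟩, ⟨R, S⟩⟩ := q
  simp only [Tset, mem_filter, mem_univ, true_and] at hq
  obtain ⟨h1, h2, h3, h4, h5, h6, h7⟩ := hq
  rw [fiber_eq h1 h2 h3 h4 h5 h6 h7, fiber_card h1 h6]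

end Aux

section Aux2
variable {G : Type} [AddCommGroup G] [Fintype G] [DecidableEq G]

lemma sum_cnum_sq : ∑ A : G, cnum A * cnum A = cnum (0 : G) * Fintype.card G := by
  have h : ∀ A : G, cnum A * cnum A = cnum (0 : G) * cnum A := by
    intro A
    rcases cnum_eq_zero_or A with h | h
    · rw [h]; ring
    · rw [h]
  rw [Finset.sum_congr rfl (fun A _ => h A), ← Finset.mul_sum, sum_cnum]

end Aux2

/-- For `G` finite abelian of order `n ≥ 4` with `ε = |G[2]|`, the
number of vectors `e_P + e_Q − e_R − e_S ∈ ℤ^G` with `P, Q, R, S` pairwise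
distinct and `P + Q = R + S` equals
`(n/ε)·(n−ε)(n−ε−2)/4 + (n − n/ε)·n(n−2)/4`. -/
theorem stmt_7 (G : Type) [AddCommGroup G] [Fintype G] [DecidableEq G] (n ε : ℕ)
    (hn : Fintype.card G = n) (hn4 : 4 ≤ n)
    (hε : ε = Nat.card {x : G // 2 • x = 0}) :
    (Nat.card {x : G → ℤ // ∃ P Q R S : G,
        P ≠ Q ∧ P ≠ R ∧ P ≠ S ∧ Q ≠ R ∧ Q ≠ S ∧ R ≠ S ∧ P + Q = R + S ∧
        x = Pi.single P 1 + Pi.single Q 1 - Pi.single R 1 - Pi.single S 1} : ℚ) =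
      ((n : ℚ) / ε) * (((n : ℚ) - ε) * ((n : ℚ) - ε - 2) / 4) +
        ((n : ℚ) - (n : ℚ) / ε) * ((n : ℚ) * ((n : ℚ) - 2) / 4) := by
  classical
  haveI : Nonempty {x : G // 2 • x = 0} := ⟨⟨0, by simp⟩⟩
  have hε0 : 0 < ε := by rw [hε]; exact Nat.card_pos
  have hcnum0 : cnum (0 : G) = ε := by rw [hε, cnum_zero_eq]
  -- identify the set of vectors with the image of Tset under gvec
  have hset : {x : G → ℤ | ∃ P Q R S : G,
      P ≠ Q ∧ P ≠ R ∧ P ≠ S ∧ Q ≠ R ∧ Q ≠ S ∧ R ≠ S ∧ P + Q = R + S ∧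
      x = Pi.single P 1 + Pi.single Q 1 - Pi.single R 1 - Pi.single S 1}
      = ↑((Tset G).image gvec) := by
    ext x
    simp only [Set.mem_setOf_eq, coe_image, Set.mem_image, mem_coe, Tset, mem_filter,
      mem_univ, true_and]
    constructor
    · rintro ⟨P, Q, R, S, h1, h2, h3, h4, h5, h6, h7, rfl⟩
      exact ⟨((P,Q),(R,S)), ⟨h1, h2, h3, h4, h5, h6, h7⟩, rfl⟩
    · rintro ⟨⟨⟨P, Q⟩, ⟨R, S⟩⟩, ⟨h1, h2, h3, h4, h5, h6, h7⟩, rfl⟩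
      exact ⟨P, Q, R, S, h1, h2, h3, h4, h5, h6, h7, rfl⟩
  have hNcard : Nat.card {x : G → ℤ // ∃ P Q R S : G,
      P ≠ Q ∧ P ≠ R ∧ P ≠ S ∧ Q ≠ R ∧ Q ≠ S ∧ R ≠ S ∧ P + Q = R + S ∧
      x = Pi.single P 1 + Pi.single Q 1 - Pi.single R 1 - Pi.single S 1}
      = ((Tset G).image gvec).card := by
    calc Nat.card {x : G → ℤ // ∃ P Q R S : G,
          P ≠ Q ∧ P ≠ R ∧ P ≠ S ∧ Q ≠ R ∧ Q ≠ S ∧ R ≠ S ∧ P + Q = R + S ∧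
          x = Pi.single P 1 + Pi.single Q 1 - Pi.single R 1 - Pi.single S 1}
        = Set.ncard {x : G → ℤ | ∃ P Q R S : G,
          P ≠ Q ∧ P ≠ R ∧ P ≠ S ∧ Q ≠ R ∧ Q ≠ S ∧ R ≠ S ∧ P + Q = R + S ∧
          x = Pi.single P 1 + Pi.single Q 1 - Pi.single R 1 - Pi.single S 1} :=
        Nat.card_coe_set_eq _
      _ = _ := by rw [hset, Set.ncard_coe_finset]
  rw [hNcard]
  -- compute the cardinality of Tprime in ℚ
  have hf : ∀ A : G, ((pairFin A).card : ℚ) = (n : ℚ) - cnum A := by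
    intro A
    have h := pairFin_card_add A
    rw [hn] at h
    have : ((pairFin A).card : ℚ) + cnum A = n := by exact_mod_cast h
    linarith
  have s1 : ∑ A : G, ((cnum A : ℚ)) = n := by
    rw [← Nat.cast_sum, sum_cnum, hn]
  have s2 : ∑ A : G, ((cnum A : ℚ) * (cnum A : ℚ)) = (ε : ℚ) * n := by
    have h := sum_cnum_sq (G := G)
    rw [hcnum0, hn] at h
    exact_mod_cast h
  have hTp : ((Tprime G).card : ℚ) = (n : ℚ)^3 - 2*(n:ℚ)^2 + (ε:ℚ)*n := by
    rw [Tprime_card]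
    push_cast
    rw [Finset.sum_congr rfl (fun A (_ : A ∈ univ) => by rw [hf A])]
    have expand : ∑ A : G, ((n : ℚ) - cnum A) * ((n : ℚ) - cnum A)
        = ∑ A : G, ((n : ℚ)^2 - 2*(n:ℚ)*(cnum A : ℚ) + (cnum A : ℚ)*(cnum A : ℚ)) := by
      refine Finset.sum_congr rfl fun A _ => by ring
    rw [expand]
    rw [Finset.sum_add_distrib, Finset.sum_sub_distrib, Finset.sum_const, ← Finset.mul_sum,
      s1, s2, Finset.card_univ, hn]
    push_cast
    ring
  have hD : ((Dset G).card : ℚ) = 2*((n:ℚ)^2 - n) := by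
    rw [Dset_card, Finset.offDiag_card, Finset.card_univ, hn]
    have h1 : n ≤ n * n := Nat.le_mul_of_pos_left n (by omega)
    push_cast [Nat.cast_sub h1]
    ring
  have hsplit : (Tprime G).card = (Tset G).card + (Dset G).card := by
    rw [Tprime_partition, Finset.card_union_of_disjoint Tdisj]
  have hT : ((Tset G).card : ℚ) = (n:ℚ)^3 - 4*(n:ℚ)^2 + 2*(n:ℚ) + (ε:ℚ)*n := by
    have h : ((Tprime G).card : ℚ) = ((Tset G).card : ℚ) + ((Dset G).card : ℚ) := by
      exact_mod_cast hsplit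
    rw [hTp, hD] at h
    linarith
  have h4 : ((Tset G).card : ℚ) = 4 * (((Tset G).image gvec).card : ℚ) := by
    exact_mod_cast Tcard_eq (G := G)
  have hεQ : (ε : ℚ) ≠ 0 := by
    exact_mod_cast hε0.ne'
  have hX : (((Tset G).image gvec).card : ℚ)
      = ((n:ℚ)^3 - 4*(n:ℚ)^2 + 2*(n:ℚ) + (ε:ℚ)*n)/4 := by
    linarith
  rw [hX]
  field_simp
  ring
end

section
/- Let G be a finite abelian group, g_0, ..., g_{n-1} an enumeration with g_0 = 0, and L = {x ∈ ℤ^n : Σ x_i = 0, Σ x_i g_i = 0}. Then L is generated, as a group, by the vectors e_P + e_Q − e_R − e_0 where P, Q, R are indices with g_P + g_Q = g_R. -/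
/-- The lattice `L = {x ∈ ℤ^n : ∑ x i = 0, ∑ x i • g i = 0}` is
generated as a group by the vectors `e_P + e_Q − e_R − e_0` with `g P + g Q = g R`. -/
theorem stmt_8 (n : ℕ) (hn : 0 < n) (G : Type) [AddCommGroup G] [Fintype G]
    (hcard : Fintype.card G = n) (g : Fin n ≃ G) (hg0 : g ⟨0, hn⟩ = 0)
    (L : AddSubgroup (Fin n → ℤ))
    (hL : ∀ x, x ∈ L ↔ (∑ i, x i = 0 ∧ ∑ i, x i • g i = 0)) :
    L = AddSubgroup.closure {x : Fin n → ℤ | ∃ P Q R : Fin n, g P + g Q = g R ∧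
      x = Pi.single P 1 + Pi.single Q 1 - Pi.single R 1 - Pi.single ⟨0, hn⟩ 1} := by
  set C := AddSubgroup.closure {x : Fin n → ℤ | ∃ P Q R : Fin n, g P + g Q = g R ∧
      x = Pi.single P 1 + Pi.single Q 1 - Pi.single R 1 - Pi.single (⟨0, hn⟩ : Fin n) 1} with hC
  apply le_antisymm
  · intro x hx
    rw [hL] at hx
    obtain ⟨h1, h2⟩ := hx
    let π := QuotientAddGroup.mk' C
    have hmem : ∀ v : Fin n → ℤ, π v = 0 ↔ v ∈ C := by
      intro v; exact QuotientAddGroup.eq_zero_iff v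
    have key : ∀ a b : G,
        π (Pi.single (g.symm a) 1 - Pi.single (⟨0, hn⟩ : Fin n) 1) +
          π (Pi.single (g.symm b) 1 - Pi.single (⟨0, hn⟩ : Fin n) 1) =
        π (Pi.single (g.symm (a + b)) 1 - Pi.single (⟨0, hn⟩ : Fin n) 1) := by
      intro a b
      have hin : (Pi.single (g.symm a) 1 + Pi.single (g.symm b) 1
          - Pi.single (g.symm (a + b)) 1 - Pi.single (⟨0, hn⟩ : Fin n) (1 : ℤ)) ∈ C := by
        apply AddSubgroup.subset_closure
        exact ⟨g.symm a, g.symm b, g.symm (a + b), by simp, rfl⟩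
      have h0 : π (Pi.single (g.symm a) 1 + Pi.single (g.symm b) 1
          - Pi.single (g.symm (a + b)) 1 - Pi.single (⟨0, hn⟩ : Fin n) (1 : ℤ)) = 0 :=
        (hmem _).2 hin
      have hrw : (Pi.single (g.symm a) (1:ℤ) - Pi.single (⟨0, hn⟩ : Fin n) (1:ℤ)) +
          (Pi.single (g.symm b) (1:ℤ) - Pi.single (⟨0, hn⟩ : Fin n) (1:ℤ)) -
          (Pi.single (g.symm (a + b)) (1:ℤ) - Pi.single (⟨0, hn⟩ : Fin n) (1:ℤ)) =
          (Pi.single (g.symm a) 1 + Pi.single (g.symm b) 1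
          - Pi.single (g.symm (a + b)) 1 - Pi.single (⟨0, hn⟩ : Fin n) (1 : ℤ) : Fin n → ℤ) := by abel
      have := map_sub π ((Pi.single (g.symm a) (1:ℤ) - Pi.single (⟨0, hn⟩ : Fin n) (1:ℤ)) +
          (Pi.single (g.symm b) (1:ℤ) - Pi.single (⟨0, hn⟩ : Fin n) (1:ℤ)))
          (Pi.single (g.symm (a + b)) (1:ℤ) - Pi.single (⟨0, hn⟩ : Fin n) (1:ℤ))
      rw [hrw, h0, map_add] at this
      linear_combination (norm := abel) -this
    let ψ : G →+ (Fin n → ℤ) ⧸ C :=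
      AddMonoidHom.mk' (fun a => π (Pi.single (g.symm a) 1 - Pi.single (⟨0, hn⟩ : Fin n) 1))
        (fun a b => (key a b).symm)
    have hψ0 : ψ 0 = 0 := map_zero ψ
    have hsingle : ∀ P : Fin n, π (Pi.single P 1) = ψ (g P) + π (Pi.single (⟨0, hn⟩ : Fin n) 1) := by
      intro P
      show _ = π (Pi.single (g.symm (g P)) (1:ℤ) - Pi.single (⟨0, hn⟩ : Fin n) (1:ℤ)) +
        π (Pi.single (⟨0, hn⟩ : Fin n) (1:ℤ))
      rw [← map_add, Equiv.symm_apply_apply, sub_add_cancel]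
    have hx : x = ∑ P : Fin n, (x P) • Pi.single P (1 : ℤ) := by
      funext i
      simp [Pi.single_apply, Finset.sum_apply, smul_eq_mul, mul_ite]
    have hπx : π x = 0 := by
      rw [hx, map_sum]
      have : ∀ P : Fin n, π ((x P) • Pi.single P (1 : ℤ)) =
          (x P) • ψ (g P) + (x P) • π (Pi.single (⟨0, hn⟩ : Fin n) 1) := by
        intro P
        rw [map_zsmul, hsingle P]
        exact zsmul_add _ _ _
      rw [Finset.sum_congr rfl (fun P _ => this P), Finset.sum_add_distrib,
        ← Finset.sum_smul, h1, zero_smul, add_zero]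
      have hms := map_sum ψ (fun P => x P • g P) Finset.univ
      simp only [map_zsmul] at hms
      rw [← hms, h2, hψ0]
    rw [hx] at hπx ⊢
    exact (hmem _).1 hπx
  · rw [hC, AddSubgroup.closure_le]
    rintro x ⟨P, Q, R, hPQR, rfl⟩
    rw [SetLike.mem_coe, hL]
    constructor
    · simp [Pi.single_apply, Finset.sum_add_distrib, Finset.sum_sub_distrib]
    · have : ∀ i : Fin n,
        (Pi.single P 1 + Pi.single Q 1 - Pi.single R 1 - Pi.single (⟨0, hn⟩ : Fin n) (1:ℤ) : Fin n → ℤ) i • g i =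
        ((Pi.single P 1 : Fin n → ℤ) i) • g i + ((Pi.single Q 1 : Fin n → ℤ) i) • g i
        - ((Pi.single R 1 : Fin n → ℤ) i) • g i - ((Pi.single (⟨0, hn⟩ : Fin n) 1 : Fin n → ℤ) i) • g i := by
        intro i
        simp only [Pi.add_apply, Pi.sub_apply, sub_smul, add_smul]
      rw [Finset.sum_congr rfl (fun i _ => this i)]
      have hs : ∀ P : Fin n, ∑ i, ((Pi.single P 1 : Fin n → ℤ) i) • g i = g P := by
        intro P
        rw [Finset.sum_eq_single P]
        · simp
        · intro b _ hb; simp [Pi.single_apply, hb]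
        · simp
      simp only [Finset.sum_sub_distrib, Finset.sum_add_distrib, hs]
      rw [hPQR, hg0]
      abel
end

section
/- Let G be a finite abelian group of order n ≥ 5, g_0, ..., g_{n-1} an enumeration with g_0 = 0, and L = {x ∈ ℤ^n : Σ x_i = 0, Σ x_i g_i = 0}. Then every vector of the form e_P + e_Q − e_R − e_0 with g_P + g_Q = g_R (P, Q, R, 0 indices, not necessarily distinct) is an integer linear combination of vectors of L of Euclidean norm 2. -/
section Aux

variable {n : ℕ} {G : Type} [AddCommGroup G] [Fintype G]

lemma exists_fresh (hn : 5 ≤ n) (a b c d : Fin n) :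
    ∃ s : Fin n, s ≠ a ∧ s ≠ b ∧ s ≠ c ∧ s ≠ d := by
  have h1 := Finset.card_insert_le a ({b, c, d} : Finset (Fin n))
  have h2 := Finset.card_insert_le b ({c, d} : Finset (Fin n))
  have h3 := Finset.card_insert_le c ({d} : Finset (Fin n))
  have h4 : ({d} : Finset (Fin n)).card = 1 := Finset.card_singleton d
  have hne : (({a, b, c, d} : Finset (Fin n))ᶜ).Nonempty := by
    rw [← Finset.card_pos, Finset.card_compl, Fintype.card_fin]
    omega
  obtain ⟨s, hs⟩ := hne
  simp only [Finset.mem_compl, Finset.mem_insert, Finset.mem_singleton, not_or] at hs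
  exact ⟨s, hs.1, hs.2.1, hs.2.2.1, hs.2.2.2⟩

lemma aux_mem (g : Fin n ≃ G) (A B C D : Fin n)
    (hAB : A ≠ B) (hAC : A ≠ C) (hAD : A ≠ D) (hBC : B ≠ C) (hBD : B ≠ D) (hCD : C ≠ D)
    (h : g A + g B = g C + g D) :
    (Pi.single A 1 + Pi.single B 1 - Pi.single C 1 - Pi.single D 1 : Fin n → ℤ) ∈
      {x : Fin n → ℤ | (∑ i, x i = 0) ∧ (∑ i, x i • g i = 0) ∧
        Real.sqrt (∑ i, ((x i : ℝ)) ^ 2) = 2} := by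
  have ssum : ∀ a : Fin n, ∑ i, (Pi.single a 1 : Fin n → ℤ) i = 1 := by
    intro a; simp [Pi.single_apply]
  have ssmul : ∀ a : Fin n, ∑ i, (Pi.single a 1 : Fin n → ℤ) i • g i = g a := by
    intro a; simp [Pi.single_apply, ite_smul]
  refine ⟨?_, ?_, ?_⟩
  · simp only [Pi.add_apply, Pi.sub_apply, Finset.sum_add_distrib, Finset.sum_sub_distrib, ssum]
    ring
  · simp only [Pi.add_apply, Pi.sub_apply, add_smul, sub_smul, Finset.sum_add_distrib,
      Finset.sum_sub_distrib, ssmul]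
    rw [h]; abel
  · have key : ∀ i : Fin n,
        (((Pi.single A 1 + Pi.single B 1 - Pi.single C 1 - Pi.single D 1 : Fin n → ℤ) i : ℝ)) ^ 2
          = (if i = A then (1:ℝ) else 0) + (if i = B then 1 else 0) + (if i = C then 1 else 0)
            + (if i = D then 1 else 0) := by
      intro i
      simp only [Pi.add_apply, Pi.sub_apply, Pi.single_apply]
      push_cast
      split_ifs <;> simp_all <;> ring
    rw [Finset.sum_congr rfl (fun i _ => key i)]
    have h4 : ∑ i : Fin n, ((if i = A then (1:ℝ) else 0) + (if i = B then 1 else 0)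
        + (if i = C then 1 else 0) + (if i = D then 1 else 0)) = 4 := by
      simp [Finset.sum_add_distrib]
      norm_num
    rw [h4, show (4:ℝ) = 2 ^ 2 by norm_num, Real.sqrt_sq (by norm_num : (0:ℝ) ≤ 2)]

end Aux

/-- For `G` finite abelian of order `n ≥ 5`, enumeration `g`,
`g 0 = 0`: every vector `e_P + e_Q − e_R − e_0` with `g P + g Q = g R` is an
integer linear combination of vectors of `L` of Euclidean norm `2`. -/
theorem stmt_9 (n : ℕ) (hn : 5 ≤ n) (G : Type) [AddCommGroup G] [Fintype G]
    (hcard : Fintype.card G = n) (g : Fin n ≃ G) (hg0 : g ⟨0, by omega⟩ = 0)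
    (P Q R : Fin n) (hPQR : g P + g Q = g R) :
    (Pi.single P 1 + Pi.single Q 1 - Pi.single R 1 - Pi.single ⟨0, by omega⟩ 1 : Fin n → ℤ) ∈
      AddSubgroup.closure {x : Fin n → ℤ | (∑ i, x i = 0) ∧ (∑ i, x i • g i = 0) ∧
        Real.sqrt (∑ i, ((x i : ℝ)) ^ 2) = 2} := by
  classical
  set L := AddSubgroup.closure {x : Fin n → ℤ | (∑ i, x i = 0) ∧ (∑ i, x i • g i = 0) ∧
      Real.sqrt (∑ i, ((x i : ℝ)) ^ 2) = 2} with hL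
  set z : Fin n := ⟨0, by omega⟩ with hzdef
  have hgz : g z = 0 := hg0
  suffices h : (Pi.single P 1 + Pi.single Q 1 - Pi.single R 1 - Pi.single z 1 : Fin n → ℤ) ∈ L by
    exact h
  -- trivial cases P = z or Q = z
  by_cases hPz : P = z
  · have hQR : Q = R := g.injective (by rw [← hPQR, hPz, hgz, zero_add])
    rw [hPz, ← hQR]
    have hv : (Pi.single z 1 + Pi.single Q 1 - Pi.single Q 1 - Pi.single z 1 : Fin n → ℤ) = 0 := by
      abel
    rw [hv]; exact zero_mem L
  by_cases hQz : Q = z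
  · have hPR : P = R := g.injective (by rw [← hPQR, hQz, hgz, add_zero])
    rw [hQz, ← hPR]
    have hv : (Pi.single P 1 + Pi.single z 1 - Pi.single P 1 - Pi.single z 1 : Fin n → ℤ) = 0 := by
      abel
    rw [hv]; exact zero_mem L
  have hgP : g P ≠ 0 := fun h => hPz (g.injective (h.trans hgz.symm))
  have hgQ : g Q ≠ 0 := fun h => hQz (g.injective (h.trans hgz.symm))
  have hPR : P ≠ R := by
    intro h
    apply hgQ
    have h1 := hPQR
    rw [h] at h1
    exact add_eq_left.mp h1
  have hQR : Q ≠ R := by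
    intro h
    apply hgP
    have h1 := hPQR
    rw [h] at h1
    exact add_eq_right.mp h1
  have hsymm : ∀ {s : Fin n} {x : G}, s ≠ g.symm x → g s ≠ x := by
    intro s x h hx
    exact h (by rw [← hx, Equiv.symm_apply_apply])
  by_cases hRz : R = z
  · have h0 : g P + g Q = 0 := by rw [hPQR, hRz, hgz]
    by_cases hPQ : P = Q
    · -- case: v = 2e_P - 2e_z, 2 g P = 0
      have hPP0 : g P + g P = 0 := by rw [hPQ] at h0 ⊢; exact h0
      obtain ⟨S, hS1, hS2, -, -⟩ := exists_fresh (n := n) hn z P P P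
      have hgS0 : g S ≠ 0 := fun h => hS1 (g.injective (h.trans hgz.symm))
      have hgSP : g S ≠ g P := fun h => hS2 (g.injective h)
      set T := g.symm (g P + g S) with hTdef
      have hgT : g T = g P + g S := g.apply_symm_apply _
      have hTP : T ≠ P := by
        intro h; apply hgS0
        have := congrArg g h; rw [hgT] at this
        exact add_eq_left.mp (by rw [add_comm] at this; rw [add_comm]; exact this)
      have hTS : T ≠ S := by
        intro h; apply hgP
        have := congrArg g h; rw [hgT] at this
        exact add_eq_right.mp this
      have hTz : T ≠ z := by
        intro h; apply hgSP
        have := congrArg g h; rw [hgT, hgz] at this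
        have h1 : g S = -g P := eq_neg_of_add_eq_zero_right this
        have h2 : g P = -g P := eq_neg_of_add_eq_zero_right hPP0
        rw [h1, ← h2]
      have m1 := aux_mem g P S T z hS2.symm hTP.symm hPz hTS.symm hS1 hTz
        (by rw [hgT, hgz, add_zero])
      have m2 := aux_mem g P T S z hTP.symm hS2.symm hPz hTS hTz hS1
        (by rw [hgT, hgz, add_zero, ← add_assoc, hPP0, zero_add])
      rw [← hPQ, hRz]
      have hv : (Pi.single P 1 + Pi.single P 1 - Pi.single z 1 - Pi.single z 1 : Fin n → ℤ)
          = (Pi.single P 1 + Pi.single S 1 - Pi.single T 1 - Pi.single z 1)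
            + (Pi.single P 1 + Pi.single T 1 - Pi.single S 1 - Pi.single z 1) := by
        abel
      rw [hv]
      exact add_mem (AddSubgroup.subset_closure m1) (AddSubgroup.subset_closure m2)
    · -- case: v = e_P + e_Q - 2e_z, g P + g Q = 0
      obtain ⟨S, hS1, hS2, hS3, hS4⟩ := exists_fresh (n := n) hn z P Q (g.symm (g Q - g P))
      have hgS0 : g S ≠ 0 := fun h => hS1 (g.injective (h.trans hgz.symm))
      have hgSQ : g S ≠ g Q := fun h => hS3 (g.injective h)
      have hgS4 : g S ≠ g Q - g P := hsymm hS4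
      set T := g.symm (g P + g S) with hTdef
      have hgT : g T = g P + g S := g.apply_symm_apply _
      have hTP : T ≠ P := by
        intro h; apply hgS0
        have := congrArg g h; rw [hgT, add_comm] at this
        exact add_eq_right.mp this
      have hTS : T ≠ S := by
        intro h; apply hgP
        have := congrArg g h; rw [hgT] at this
        exact add_eq_right.mp this
      have hTz : T ≠ z := by
        intro h; apply hgSQ
        have := congrArg g h; rw [hgT, hgz] at this
        have h1 : g S = -g P := eq_neg_of_add_eq_zero_right this
        have h2 : g Q = -g P := eq_neg_of_add_eq_zero_right h0
        rw [h1, ← h2]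
      have hTQ : T ≠ Q := by
        intro h; apply hgS4
        have := congrArg g h; rw [hgT] at this
        rw [← this]; abel
      have m1 := aux_mem g P S T z hS2.symm hTP.symm hPz hTS.symm hS1 hTz
        (by rw [hgT, hgz, add_zero])
      have m2 := aux_mem g Q T S z hTQ.symm hS3.symm hQz hTS hTz hS1
        (by rw [hgT, hgz, add_zero, ← add_assoc, show g Q + g P = 0 from add_comm (g Q) (g P) ▸ h0,
          zero_add])
      rw [hRz]
      have hv : (Pi.single P 1 + Pi.single Q 1 - Pi.single z 1 - Pi.single z 1 : Fin n → ℤ)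
          = (Pi.single P 1 + Pi.single S 1 - Pi.single T 1 - Pi.single z 1)
            + (Pi.single Q 1 + Pi.single T 1 - Pi.single S 1 - Pi.single z 1) := by
        abel
      rw [hv]
      exact add_mem (AddSubgroup.subset_closure m1) (AddSubgroup.subset_closure m2)
  · by_cases hPQ : P = Q
    · -- case: v = 2e_P - e_R - e_z, g R = 2 g P
      have hR2 : g P + g P = g R := by
        rw [hPQ]; rw [hPQ] at hPQR; exact hPQR
      obtain ⟨S, hS1, hS2, hS3, hS4⟩ := exists_fresh (n := n) hn z P R (g.symm (-g P))
      have hgS0 : g S ≠ 0 := fun h => hS1 (g.injective (h.trans hgz.symm))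
      have hgSP : g S ≠ g P := fun h => hS2 (g.injective h)
      have hgS4 : g S ≠ -g P := hsymm hS4
      set T := g.symm (g P + g S) with hTdef
      have hgT : g T = g P + g S := g.apply_symm_apply _
      have hTP : T ≠ P := by
        intro h; apply hgS0
        have := congrArg g h; rw [hgT, add_comm] at this
        exact add_eq_right.mp this
      have hTS : T ≠ S := by
        intro h; apply hgP
        have := congrArg g h; rw [hgT] at this
        exact add_eq_right.mp this
      have hTz : T ≠ z := by
        intro h; apply hgS4
        have := congrArg g h; rw [hgT, hgz] at this
        exact eq_neg_of_add_eq_zero_right this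
      have hTR : T ≠ R := by
        intro h; apply hgSP
        have := congrArg g h; rw [hgT, ← hR2] at this
        exact add_left_cancel this
      have m1 := aux_mem g P S T z hS2.symm hTP.symm hPz hTS.symm hS1 hTz
        (by rw [hgT, hgz, add_zero])
      have m2 := aux_mem g P T R S hTP.symm hPR hS2.symm hTR hTS hS3.symm
        (by rw [hgT, ← add_assoc, hR2])
      rw [← hPQ]
      have hv : (Pi.single P 1 + Pi.single P 1 - Pi.single R 1 - Pi.single z 1 : Fin n → ℤ)
          = (Pi.single P 1 + Pi.single S 1 - Pi.single T 1 - Pi.single z 1)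
            + (Pi.single P 1 + Pi.single T 1 - Pi.single R 1 - Pi.single S 1) := by
        abel
      rw [hv]
      exact add_mem (AddSubgroup.subset_closure m1) (AddSubgroup.subset_closure m2)
    · -- all distinct
      exact AddSubgroup.subset_closure
        (aux_mem g P Q R z hPQ hPR hPz hQR hQz hRz (by rw [hPQR, hgz, add_zero]))
end

section
/- Let G = ℤ/3ℤ with enumeration g_0 = 0, g_1 = 1, g_2 = 2, and L = {x ∈ ℤ³ : x_0 + x_1 + x_2 = 0 and x_1 + 2x_2 ≡ 0 (mod 3)}. Then the minimal nonzero norm in L is √6, and the vectors of norm √6 in L are exactly ±(−2, 1, 1), ±(1, −2, 1), ±(1, 1, −2). -/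
lemma min_norm (a b c : ℤ) (h1 : a + b + c = 0) (h2 : (3:ℤ) ∣ b + 2*c)
    (h3 : ¬(a = 0 ∧ b = 0 ∧ c = 0)) : 6 ≤ a^2 + b^2 + c^2 := by
  obtain ⟨k, hk⟩ := h2
  have hb : b = c + 3*(k - c) := by omega
  have ha : a = -b - c := by omega
  set d := k - c with hd
  have key : a^2 + b^2 + c^2 = 6 * (c^2 + 3*c*d + 3*d^2) := by
    subst ha hb; ring
  have hpos : 1 ≤ c^2 + 3*c*d + 3*d^2 := by
    rcases eq_or_ne d 0 with hd0 | hdne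
    · have hc : c ≠ 0 := by rintro rfl; exact h3 ⟨by omega, by omega, rfl⟩
      have : 1 ≤ c^2 := by rcases lt_or_gt_of_ne hc with h|h <;> nlinarith
      nlinarith [sq_nonneg c, hd0]
    · have : 1 ≤ d^2 := by rcases lt_or_gt_of_ne hdne with h|h <;> nlinarith
      nlinarith [sq_nonneg (2*c + 3*d)]
  omega

lemma classify (a b c : ℤ) (h1 : a + b + c = 0) (h2 : (3:ℤ) ∣ b + 2*c)
    (h3 : a^2 + b^2 + c^2 = 6) :
    (a = -2 ∧ b = 1 ∧ c = 1) ∨ (a = 2 ∧ b = -1 ∧ c = -1) ∨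
    (a = 1 ∧ b = -2 ∧ c = 1) ∨ (a = -1 ∧ b = 2 ∧ c = -1) ∨
    (a = 1 ∧ b = 1 ∧ c = -2) ∨ (a = -1 ∧ b = -1 ∧ c = 2) := by
  have hb1 : -2 ≤ b := by nlinarith [sq_nonneg a, sq_nonneg c]
  have hb2 : b ≤ 2 := by nlinarith [sq_nonneg a, sq_nonneg c]
  have hc1 : -2 ≤ c := by nlinarith [sq_nonneg a, sq_nonneg b]
  have hc2 : c ≤ 2 := by nlinarith [sq_nonneg a, sq_nonneg b]
  have ha : a = -b - c := by omega
  subst ha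
  interval_cases b <;> interval_cases c <;> (try omega) <;> norm_num at h3

/-- For `G = ℤ/3ℤ` with enumeration `0, 1, 2`, the lattice
`L = {x ∈ ℤ³ : x₀ + x₁ + x₂ = 0, 3 ∣ x₁ + 2x₂}` has minimal nonzero norm `√6`,
and its norm-`√6` vectors are exactly `±(−2,1,1), ±(1,−2,1), ±(1,1,−2)`. -/
theorem stmt_11 :
    (∀ x : Fin 3 → ℤ, x 0 + x 1 + x 2 = 0 → (3 : ℤ) ∣ x 1 + 2 * x 2 → x ≠ 0 →
      Real.sqrt 6 ≤ Real.sqrt (∑ i, ((x i : ℝ)) ^ 2)) ∧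
    {x : Fin 3 → ℤ | x 0 + x 1 + x 2 = 0 ∧ (3 : ℤ) ∣ x 1 + 2 * x 2 ∧
        Real.sqrt (∑ i, ((x i : ℝ)) ^ 2) = Real.sqrt 6} =
      {![-2, 1, 1], ![2, -1, -1], ![1, -2, 1], ![-1, 2, -1], ![1, 1, -2], ![-1, -1, 2]} := by
  constructor
  · intro x h1 h2 hne
    have hx : ¬(x 0 = 0 ∧ x 1 = 0 ∧ x 2 = 0) := by
      rintro ⟨e0, e1, e2⟩
      apply hne
      funext i; fin_cases i <;> simpa
    have h6 : (6:ℤ) ≤ (x 0)^2 + (x 1)^2 + (x 2)^2 := min_norm _ _ _ h1 h2 hx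
    apply Real.sqrt_le_sqrt
    rw [Fin.sum_univ_three]
    exact_mod_cast h6
  · ext x
    simp only [Set.mem_setOf_eq, Set.mem_insert_iff, Set.mem_singleton_iff,
      Fin.sum_univ_three]
    constructor
    · rintro ⟨h1, h2, h3⟩
      have hs : ((x 0:ℝ))^2 + ((x 1:ℝ))^2 + ((x 2:ℝ))^2 = 6 := by
        have := (Real.sqrt_inj (by positivity) (by norm_num)).mp h3
        linarith
      have h6 : (x 0)^2 + (x 1)^2 + (x 2)^2 = 6 := by exact_mod_cast hs
      have := classify _ _ _ h1 h2 h6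
      have hv : ∀ a b c : ℤ, x 0 = a → x 1 = b → x 2 = c → x = ![a, b, c] := by
        intro a b c e0 e1 e2; funext i; fin_cases i <;> simpa
      rcases this with ⟨e0,e1,e2⟩|⟨e0,e1,e2⟩|⟨e0,e1,e2⟩|⟨e0,e1,e2⟩|⟨e0,e1,e2⟩|⟨e0,e1,e2⟩
      · exact Or.inl (hv _ _ _ e0 e1 e2)
      · exact Or.inr (Or.inl (hv _ _ _ e0 e1 e2))
      · exact Or.inr (Or.inr (Or.inl (hv _ _ _ e0 e1 e2)))
      · exact Or.inr (Or.inr (Or.inr (Or.inl (hv _ _ _ e0 e1 e2))))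
      · exact Or.inr (Or.inr (Or.inr (Or.inr (Or.inl (hv _ _ _ e0 e1 e2)))))
      · exact Or.inr (Or.inr (Or.inr (Or.inr (Or.inr (hv _ _ _ e0 e1 e2)))))
    · rintro (rfl|rfl|rfl|rfl|rfl|rfl) <;> norm_num [Matrix.cons_val_two, Matrix.tail_cons, Matrix.head_cons]
end

section
/- Let G be a finite abelian group of order n with enumeration g_0, ..., g_{n-1}, g_0 = 0, and L = {x ∈ ℤ^n : Σ x_i = 0, Σ x_i g_i = 0}. Then for every v ∈ ℝ^n with Σ v_i = 0 there exists w ∈ L with ‖v − w‖ ≤ (√(n² + 4n + 8) + √n)/2. In other words, the covering radius of L (inside the hyperplane Σ x_i = 0) is at most (√(n² + 4n + 8) + √n)/2. -/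
/-- Covering radius bound: for every `v ∈ ℝ^n` with `∑ v i = 0`
there is `w ∈ L = {x ∈ ℤ^n : ∑ x i = 0, ∑ x i • g i = 0}` with
`‖v − w‖ ≤ (√(n² + 4n + 8) + √n)/2`. -/
theorem stmt_13 (n : ℕ) (hn : 0 < n) (G : Type) [AddCommGroup G] [Fintype G]
    (hcard : Fintype.card G = n) (g : Fin n ≃ G) (hg0 : g ⟨0, hn⟩ = 0)
    (v : Fin n → ℝ) (hv : ∑ i, v i = 0) :
    ∃ w : Fin n → ℤ, (∑ i, w i = 0) ∧ (∑ i, w i • g i = 0) ∧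
      Real.sqrt (∑ i, (v i - (w i : ℝ)) ^ 2) ≤
        (Real.sqrt ((n : ℝ) ^ 2 + 4 * n + 8) + Real.sqrt n) / 2 := by
  classical
  set z : Fin n := ⟨0, hn⟩ with hz
  set w₁ : Fin n → ℤ := fun i => round (v i) with hw₁
  set s : ℤ := ∑ i, w₁ i with hs
  set j : Fin n := g.symm (∑ i, w₁ i • g i) with hj
  set w : Fin n → ℤ := fun i =>
    w₁ i + (if i = z then 1 - s else 0) + (if i = j then -1 else 0) with hw
  have hsum : ∑ i, w i = 0 := by
    simp only [hw, Finset.sum_add_distrib, Finset.sum_ite_eq', Finset.mem_univ, if_true]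
    rw [← hs]; ring
  have hgsum : ∑ i, w i • g i = 0 := by
    simp only [hw, add_smul, Finset.sum_add_distrib]
    rw [show (∑ i, (if i = z then 1 - s else 0) • g i) = (1 - s) • g z by
      simp [Finset.sum_ite_eq'],
      show (∑ i, (if i = j then (-1 : ℤ) else 0) • g i) = (-1 : ℤ) • g j by
      simp [Finset.sum_ite_eq']]
    rw [hg0, hj, g.apply_symm_apply]
    simp
  refine ⟨w, hsum, hgsum, ?_⟩
  set f : EuclideanSpace ℝ (Fin n) := WithLp.toLp 2 (fun i => v i - (w₁ i : ℝ)) with hf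
  set c : EuclideanSpace ℝ (Fin n) := WithLp.toLp 2 (fun i =>
    (if i = z then 1 - (s : ℝ) else 0) + (if i = j then -1 else 0)) with hc
  have hfc : Real.sqrt (∑ i, (v i - (w i : ℝ)) ^ 2) = ‖f - c‖ := by
    rw [EuclideanSpace.norm_eq]
    congr 1
    apply Finset.sum_congr rfl
    intro i _
    rw [Real.norm_eq_abs, sq_abs]
    congr 1
    show v i - (w i : ℝ) = f i - c i
    simp only [hw, hf, hc]
    by_cases h1 : i = z <;> by_cases h2 : i = j <;> simp [h1, h2] <;> push_cast <;> ring
  -- bound on ‖f‖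
  have hfb : ‖f‖ ≤ Real.sqrt n / 2 := by
    rw [EuclideanSpace.norm_eq]
    have h1 : ∑ i, ‖f i‖ ^ 2 ≤ (n : ℝ) * (1 / 2) ^ 2 := by
      calc ∑ i, ‖f i‖ ^ 2 ≤ ∑ _i : Fin n, ((1 : ℝ) / 2) ^ 2 := by
            apply Finset.sum_le_sum
            intro i _
            apply pow_le_pow_left₀ (norm_nonneg _)
            rw [Real.norm_eq_abs]
            exact abs_sub_round (v i)
        _ = (n : ℝ) * (1 / 2) ^ 2 := by simp [Finset.sum_const, mul_comm]
    calc Real.sqrt (∑ i, ‖f i‖ ^ 2) ≤ Real.sqrt ((n : ℝ) * (1 / 2) ^ 2) :=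
          Real.sqrt_le_sqrt h1
      _ = Real.sqrt n / 2 := by
          rw [Real.sqrt_mul (by positivity), Real.sqrt_sq (by norm_num)]
          ring
  -- bound on |s|
  have hsb : |(s : ℝ)| ≤ (n : ℝ) / 2 := by
    have h1 : (s : ℝ) = ∑ i, ((round (v i) : ℝ) - v i) := by
      rw [Finset.sum_sub_distrib, hv, sub_zero, hs]
      push_cast
      rfl
    rw [h1]
    calc |∑ i, ((round (v i) : ℝ) - v i)| ≤ ∑ i, |(round (v i) : ℝ) - v i| :=
          Finset.abs_sum_le_sum_abs _ _
      _ ≤ ∑ _i : Fin n, (1 : ℝ) / 2 := by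
          apply Finset.sum_le_sum
          intro i _
          rw [abs_sub_comm]
          exact abs_sub_round (v i)
      _ = (n : ℝ) / 2 := by simp [Finset.sum_const]; ring
  -- bound on ‖c‖
  have hci : ∀ i : Fin n, c i = (if i = z then 1 - (s : ℝ) else 0) + (if i = j then -1 else 0) :=
    fun i => rfl
  have hcb : ‖c‖ ≤ Real.sqrt ((n : ℝ) ^ 2 + 4 * n + 8) / 2 := by
    by_cases hjz : j = z
    · have h2 : ∀ i : Fin n, ‖c i‖ ^ 2 = if i = z then (s : ℝ) ^ 2 else 0 := by
        intro i
        rw [hci i, Real.norm_eq_abs, sq_abs, hjz]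
        by_cases h3 : i = z
        · simp only [h3, if_true]; ring
        · simp [h3]
      have h1 : ‖c‖ = |(s : ℝ)| := by
        rw [EuclideanSpace.norm_eq, Finset.sum_congr rfl (fun i _ => h2 i)]
        simp only [Finset.sum_ite_eq', Finset.mem_univ, if_true]
        exact Real.sqrt_sq_eq_abs _
      rw [h1]
      have h4 : (n : ℝ) ≤ Real.sqrt ((n : ℝ) ^ 2 + 4 * n + 8) := by
        have h5 : (n : ℝ) ^ 2 ≤ (n : ℝ) ^ 2 + 4 * n + 8 := by
          nlinarith [Nat.cast_nonneg (α := ℝ) n]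
        have := Real.sqrt_le_sqrt h5
        rwa [Real.sqrt_sq (Nat.cast_nonneg n)] at this
      linarith
    · have h2 : ∀ i : Fin n, ‖c i‖ ^ 2 =
          (if i = z then (1 - (s : ℝ)) ^ 2 else 0) + (if i = j then 1 else 0) := by
        intro i
        rw [hci i, Real.norm_eq_abs, sq_abs]
        by_cases h3 : i = z
        · by_cases h4 : i = j
          · exact absurd (h4 ▸ h3) hjz
          · subst h3; simp [h4]
        · by_cases h4 : i = j
          · subst h4; simp [h3, hjz]
          · simp [h3, h4]
      have h1 : ‖c‖ = Real.sqrt ((1 - (s : ℝ)) ^ 2 + 1) := by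
        rw [EuclideanSpace.norm_eq, Finset.sum_congr rfl (fun i _ => h2 i),
          Finset.sum_add_distrib]
        simp [Finset.sum_ite_eq']
      rw [h1]
      have h5 : (1 - (s : ℝ)) ^ 2 + 1 ≤ ((n : ℝ) / 2 + 1) ^ 2 + 1 := by
        nlinarith [neg_abs_le (s : ℝ), le_abs_self (s : ℝ), abs_nonneg (s : ℝ)]
      calc Real.sqrt ((1 - (s : ℝ)) ^ 2 + 1) ≤ Real.sqrt (((n : ℝ) / 2 + 1) ^ 2 + 1) :=
            Real.sqrt_le_sqrt h5
        _ = Real.sqrt ((n : ℝ) ^ 2 + 4 * n + 8) / 2 := by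
            rw [show (n : ℝ) ^ 2 + 4 * n + 8 = (((n : ℝ) / 2 + 1) ^ 2 + 1) * 2 ^ 2 by ring,
              Real.sqrt_mul (by positivity), Real.sqrt_sq (by norm_num)]
            ring
  calc Real.sqrt (∑ i, (v i - (w i : ℝ)) ^ 2) = ‖f - c‖ := hfc
    _ ≤ ‖f‖ + ‖c‖ := norm_sub_le _ _
    _ ≤ (Real.sqrt ((n : ℝ) ^ 2 + 4 * n + 8) + Real.sqrt n) / 2 := by linarith
end

section
/- Let G be a finite abelian group of order n with enumeration g_0, ..., g_{n-1}, g_0 = 0, and L = {x ∈ ℤ^n : Σ x_i = 0, Σ x_i g_i = 0}. Then for every integer vector v ∈ ℤ^n with Σ v_i = 0, there exists w ∈ L with ‖v − w‖ ≤ √2. -/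
/-- Every integer vector `v` with `∑ v i = 0` is within distance
`√2` of the lattice `L = {x ∈ ℤ^n : ∑ x i = 0, ∑ x i • g i = 0}`. -/
theorem stmt_14 (n : ℕ) (hn : 0 < n) (G : Type) [AddCommGroup G] [Fintype G]
    (hcard : Fintype.card G = n) (g : Fin n ≃ G) (hg0 : g ⟨0, hn⟩ = 0)
    (v : Fin n → ℤ) (hv : ∑ i, v i = 0) :
    ∃ w : Fin n → ℤ, (∑ i, w i = 0) ∧ (∑ i, w i • g i = 0) ∧
      Real.sqrt (∑ i, ((v i : ℝ) - (w i : ℝ)) ^ 2) ≤ Real.sqrt 2 := by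
  set j : Fin n := g.symm (∑ i, v i • g i) with hj
  set z : Fin n → ℤ := fun i =>
    (if i = j then 1 else 0) - (if i = (⟨0, hn⟩ : Fin n) then 1 else 0) with hz
  refine ⟨fun i => v i - z i, ?_, ?_, ?_⟩
  · simp [hz, Finset.sum_sub_distrib, hv]
  · have h1 : ∑ i, (v i - z i) • g i = (∑ i, v i • g i) - ∑ i, z i • g i := by
      simp [sub_smul, Finset.sum_sub_distrib]
    have h2 : ∑ i, z i • g i = ∑ i, v i • g i := by
      have : ∀ i, z i • g i = (if i = j then g i else 0) -
          (if i = (⟨0, hn⟩ : Fin n) then g i else 0) := by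
        intro i
        simp [hz, sub_smul, ite_smul]
      simp only [this, Finset.sum_sub_distrib, Finset.sum_ite_eq', Finset.mem_univ, if_true,
        hg0, sub_zero]
      rw [hj, Equiv.apply_symm_apply]
    rw [h1, h2, sub_self]
  · have key : ∑ i, ((v i : ℝ) - ((v i - z i : ℤ) : ℝ)) ^ 2 ≤ 2 := by
      have heq : ∀ i, ((v i : ℝ) - ((v i - z i : ℤ) : ℝ)) ^ 2 = ((z i : ℤ) : ℝ) ^ 2 := by
        intro i; push_cast; ring
      simp only [heq]
      by_cases hj0 : j = (⟨0, hn⟩ : Fin n)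
      · have : ∀ i, ((z i : ℤ) : ℝ) ^ 2 = 0 := by
          intro i; simp [hz, hj0]
        simp [this]
      · have : ∀ i, ((z i : ℤ) : ℝ) ^ 2 =
            (if i = j then (1:ℝ) else 0) + (if i = (⟨0, hn⟩ : Fin n) then (1:ℝ) else 0) := by
          intro i
          have hj0' : ¬(⟨0, hn⟩ : Fin n) = j := fun h => hj0 h.symm
          by_cases h1 : i = j <;> by_cases h2 : i = (⟨0, hn⟩ : Fin n)
          · exact absurd (h1 ▸ h2) hj0
          · norm_num [hz, h1, h2, hj0, hj0']
          · norm_num [hz, h1, h2, hj0, hj0']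
          · norm_num [hz, h1, h2, hj0, hj0']
        simp only [this, Finset.sum_add_distrib, Finset.sum_ite_eq', Finset.mem_univ, if_true]
        norm_num
    exact Real.sqrt_le_sqrt key
end
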